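/- Packing-style average error bound for the square-root measurement: Let L be a finite index set, and for each ℓ ∈ L let ρ_ℓ be a density matrix and P_ℓ a matrix with 0 ≤ P_ℓ ≤ I, all over a fixed finite index type; suppose S = Σ_ℓ P_ℓ is positive definite and set Λ_ℓ = S^{−1/2} P_ℓ S^{−1/2}. If there are λ, ν ≥ 0 such that Tr[P_ℓ ρ_ℓ] ≥ 1 − λ for every ℓ ∈ L and Tr[P_{ℓ'} ρ_ℓ] ≤ ν for all ℓ' ≠ ℓ, then the average probability of error satisfies (1/|L|) Σ_ℓ Tr[(I − Λ_ℓ) ρ_ℓ] ≤ 2λ + 4(|L| − 1)ν. -/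

import Mathlib

open scoped Matrix ComplexOrder

/-- The square root of a positive semidefinite matrix, as defined in Mathlib (December 2024). -/
noncomputable def Matrix.PosSemidef.sqrt {n 𝕜 : Type*} [Fintype n] [DecidableEq n] [RCLike 𝕜]
    {A : Matrix n n 𝕜} (hA : A.PosSemidef) : Matrix n n 𝕜 :=
  (hA.1.eigenvectorUnitary : Matrix n n 𝕜) *
    Matrix.diagonal (fun i => ((Real.sqrt (hA.1.eigenvalues i) : ℝ) : 𝕜)) *
    (star hA.1.eigenvectorUnitary : Matrix n n 𝕜)

section SRMAux
open Matrix

lemma Matrix.PosSemidef.sqrt_eq_cfc {n : Type*} [Fintype n] [DecidableEq n]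
    {A : Matrix n n ℂ} (hA : A.PosSemidef) : hA.sqrt = cfc Real.sqrt A := by
  rw [hA.1.cfc_eq]
  simp [Matrix.PosSemidef.sqrt, IsHermitian.cfc, Function.comp_def]

open scoped MatrixOrder in
lemma Matrix.PosSemidef.posSemidef_sqrt {n : Type*} [Fintype n] [DecidableEq n]
    {A : Matrix n n ℂ} (hA : A.PosSemidef) : hA.sqrt.PosSemidef := by
  rw [hA.sqrt_eq_cfc]
  exact Matrix.nonneg_iff_posSemidef.mp (cfc_nonneg (fun x _ => Real.sqrt_nonneg x))

open scoped MatrixOrder in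
lemma Matrix.PosSemidef.sqrt_mul_self {n : Type*} [Fintype n] [DecidableEq n]
    {A : Matrix n n ℂ} (hA : A.PosSemidef) : hA.sqrt * hA.sqrt = A := by
  rw [hA.sqrt_eq_cfc, ← cfc_mul Real.sqrt Real.sqrt A]
  have hnn : (0 : Matrix n n ℂ) ≤ A := Matrix.nonneg_iff_posSemidef.mpr hA
  conv_rhs => rw [← cfc_id ℝ A]
  refine cfc_congr fun x hx => ?_
  have : 0 ≤ x := spectrum_nonneg_of_nonneg hnn hx
  simp [Real.mul_self_sqrt this]

variable {n : Type*} [Fintype n] [DecidableEq n]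

lemma psd_sub_of_sq_sub_sq {R T : Matrix n n ℂ} (hR : R.PosSemidef) (hT : T.PosSemidef)
    (hsq : (T * T - R * R).PosSemidef) : (T - R).PosSemidef := by
  have hC : (T - R).IsHermitian := hT.1.sub hR.1
  refine hC.posSemidef_iff_eigenvalues_nonneg.mpr fun i => ?_
  set t : ℝ := hC.eigenvalues i with htdef
  set v : n → ℂ := ⇑(hC.eigenvectorBasis i) with hvdef
  have hv : (T - R) *ᵥ v = t • v := hC.mulVec_eigenvectorBasis i
  have hvne : v ≠ 0 := by
    have := hC.eigenvectorBasis.orthonormal.ne_zero i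
    intro h
    exact this (by ext j; exact congrFun h j)
  have hdec : T * T - R * R = T * (T - R) + (T - R) * R := by noncomm_ring
  set a : ℂ := star v ⬝ᵥ T *ᵥ v with hadef
  set b : ℂ := star v ⬝ᵥ R *ᵥ v with hbdef
  have ha : 0 ≤ a := hT.dotProduct_mulVec_nonneg v
  have hb : 0 ≤ b := hR.dotProduct_mulVec_nonneg v
  have key : star v ⬝ᵥ (T * T - R * R) *ᵥ v = (t : ℂ) * (a + b) := by
    rw [hdec, add_mulVec, dotProduct_add]
    have h1 : star v ⬝ᵥ (T * (T - R)) *ᵥ v = (t : ℂ) * a := by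
      rw [← mulVec_mulVec, hv, mulVec_smul, dotProduct_smul, RCLike.real_smul_eq_coe_mul]; rfl
    have h2 : star v ⬝ᵥ ((T - R) * R) *ᵥ v = (t : ℂ) * b := by
      rw [← mulVec_mulVec, dotProduct_mulVec]
      have hsv : star v ᵥ* (T - R) = t • star v := by
        rw [← hC.eq, ← star_mulVec, hv]
        ext j
        simp [Pi.smul_apply, star_smul]
      rw [hsv, smul_dotProduct, RCLike.real_smul_eq_coe_mul]; rfl
    rw [h1, h2]; ring
  have hq : 0 ≤ (t : ℂ) * (a + b) := key ▸ hsq.dotProduct_mulVec_nonneg v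
  rcases eq_or_ne (a + b) 0 with hab | hab
  · have ha0 : a = 0 := le_antisymm ((le_add_of_nonneg_right hb).trans hab.le) ha
    have hb0 : b = 0 := by rwa [ha0, zero_add] at hab
    have hT0 : T *ᵥ v = 0 := (hT.dotProduct_mulVec_zero_iff v).mp ha0
    have hR0 : R *ᵥ v = 0 := (hR.dotProduct_mulVec_zero_iff v).mp hb0
    have hCv : (0 : n → ℂ) = t • v := by
      rw [← hv, sub_mulVec, hT0, hR0, sub_zero]
    rcases smul_eq_zero.mp hCv.symm with h | h
    · exact h.ge
    · exact absurd h hvne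
  · have hnn := Complex.nonneg_iff.mp (add_nonneg ha hb)
    have habpos : 0 < (a + b).re := by
      rcases lt_or_eq_of_le hnn.1 with h | h
      · exact h
      · exact absurd (Complex.ext h.symm hnn.2.symm) hab
    have hre : 0 ≤ ((t : ℂ) * (a + b)).re := (Complex.nonneg_iff.mp hq).1
    rw [Complex.mul_re, Complex.ofReal_re, Complex.ofReal_im, ← hnn.2] at hre
    simp only [mul_zero, zero_mul, sub_zero] at hre
    exact nonneg_of_mul_nonneg_left hre habpos

lemma sqrt_mono' {A B : Matrix n n ℂ} (hA : A.PosSemidef) (hB : B.PosSemidef)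
    (hAB : (B - A).PosSemidef) : (hB.sqrt - hA.sqrt).PosSemidef := by
  refine psd_sub_of_sq_sub_sq hA.posSemidef_sqrt hB.posSemidef_sqrt ?_
  rw [hB.sqrt_mul_self, hA.sqrt_mul_self]
  exact hAB


lemma sqrt_one' : (Matrix.PosSemidef.one : (1 : Matrix n n ℂ).PosSemidef).sqrt = 1 :=
  by
  rw [Matrix.PosSemidef.sqrt_eq_cfc, ← map_one (algebraMap ℝ (Matrix n n ℂ)), cfc_algebraMap]
  simp

/-- If `0 ≤ P ≤ 1` then `P ≤ √P`. -/
lemma le_sqrt_self {P : Matrix n n ℂ} (hP : P.PosSemidef) (hP1 : (1 - P).PosSemidef) :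
    (hP.sqrt - P).PosSemidef := by
  set R := hP.sqrt with hRdef
  have hR : R.PosSemidef := hP.posSemidef_sqrt
  set Q := hR.sqrt with hQdef
  have hQ : Q.PosSemidef := hR.posSemidef_sqrt
  have hQQ : Q * Q = R := hR.sqrt_mul_self
  have hRR : R * R = P := hP.sqrt_mul_self
  -- 1 - R is PSD since sqrt is monotone and sqrt 1 = 1
  have h1R : (1 - R).PosSemidef := by
    have := psd_sub_of_sq_sub_sq (R := R) (T := 1) hR Matrix.PosSemidef.one
      (by rw [one_mul, hRR]; exact hP1)
    exact this
  have key : R - P = Q * (1 - R) * Qᴴ := by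
    rw [hQ.1.eq]
    have e1 : Q * (1 - R) * Q = Q * Q - Q * R * Q := by noncomm_ring
    rw [e1, ← hQQ]
    rw [show Q * (Q * Q) * Q = Q * Q * (Q * Q) from by noncomm_ring, hQQ, hRR]
  rw [key]
  exact h1R.mul_mul_conjTranspose_same Q

/-- Hayashi–Nagaoka operator inequality. -/
lemma hn_ineq {P S : Matrix n n ℂ} (hP : P.PosSemidef) (hP1 : (1 - P).PosSemidef)
    (hS : S.PosDef) (hSP : (S - P).PosSemidef) :
    (((1 - P) + (1 - P) + ((S - P) + (S - P) + (S - P) + (S - P)))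
      - (1 - (hS.posSemidef.sqrt)⁻¹ * P * (hS.posSemidef.sqrt)⁻¹)).PosSemidef := by
  set T := hS.posSemidef.sqrt with hTdef
  have hT : T.PosSemidef := hS.posSemidef.posSemidef_sqrt
  have hTT : T * T = S := hS.posSemidef.sqrt_mul_self
  have hdetT : IsUnit T.det := by
    have h1 : T.det * T.det = S.det := by rw [← det_mul, hTT]
    have h2 : S.det ≠ 0 := hS.det_pos.ne'
    exact isUnit_iff_ne_zero.mpr (fun h => h2 (by rw [← h1, h, mul_zero]))
  set M := T⁻¹ with hMdef
  have hM : M.PosSemidef := hT.inv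
  have hMT : M * T = 1 := nonsing_inv_mul T hdetT
  have hTM : T * M = 1 := mul_nonsing_inv T hdetT
  have hMS : M * S = T := by rw [← hTT, ← mul_assoc, hMT, one_mul]
  have hSM : S * M = T := by rw [← hTT, mul_assoc, hTM, mul_one]
  have hMSM : M * S * M = 1 := by rw [hMS, hTM]
  -- T - P is PSD : P ≤ √P ≤ √S = T
  have hTP : (T - P).PosSemidef := by
    have h1 : (T - hP.sqrt).PosSemidef := by
      refine psd_sub_of_sq_sub_sq hP.posSemidef_sqrt hT ?_
      rw [hTT, hP.sqrt_mul_self]; exact hSP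
    have h2 : (hP.sqrt - P).PosSemidef := le_sqrt_self hP hP1
    have := h1.add h2
    rwa [sub_add_sub_cancel] at this
  have hBH : ((1 + 1 : Matrix n n ℂ) - M)ᴴ = (1 + 1) - M := by
    rw [conjTranspose_sub, conjTranspose_add, conjTranspose_one, hM.1.eq]
  have hCmH : (M - 1)ᴴ = M - 1 := by
    rw [conjTranspose_sub, conjTranspose_one, hM.1.eq]
  have hD1 : (((1 + 1) - M) * (S - P) * ((1 + 1) - M)).PosSemidef := by
    have := hSP.mul_mul_conjTranspose_same ((1 + 1) - M)
    rwa [hBH] at this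
  have hD2 : ((M - 1) * P * (M - 1)).PosSemidef := by
    have := hP.mul_mul_conjTranspose_same (M - 1)
    rwa [hCmH] at this
  have hrel : (M * S * M - (M * S + M * S) - (S * M + S * M) + (T + T + T + T)) - 1
      = (0 : Matrix n n ℂ) := by
    rw [hMSM, hMS, hSM]; noncomm_ring
  have main : ((1+1) - M) * (S - P) * ((1+1) - M) + ((M-1)*P*(M-1) + (M-1)*P*(M-1))
        + ((T-P)+(T-P)+(T-P)+(T-P))
      = (((1-P)+(1-P)+((S-P)+(S-P)+(S-P)+(S-P))) - (1 - M*P*M)) := by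
    have e : ((1+1) - M) * (S - P) * ((1+1) - M) + ((M-1)*P*(M-1) + (M-1)*P*(M-1))
          + ((T-P)+(T-P)+(T-P)+(T-P))
        = (((1-P)+(1-P)+((S-P)+(S-P)+(S-P)+(S-P))) - (1 - M*P*M))
          + ((M*S*M - (M*S+M*S) - (S*M+S*M) + (T+T+T+T)) - 1) := by
      noncomm_ring
    rw [e, hrel, add_zero]
  rw [← main]
  exact (hD1.add (hD2.add hD2)).add (((hTP.add hTP).add hTP).add hTP)


lemma trace_re_nonneg' {C : Matrix n n ℂ} (hC : C.PosSemidef) : 0 ≤ C.trace.re := by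
  have h : ∀ i, 0 ≤ (C i i).re := by
    intro i
    have := hC.re_dotProduct_nonneg (Pi.single i 1)
    simpa [dotProduct, mulVec, Pi.single_apply, Finset.mul_sum] using this
  rw [Matrix.trace, Complex.re_sum]
  exact Finset.sum_nonneg fun i _ => h i

lemma trace_mul_re_nonneg' {A B : Matrix n n ℂ} (hA : A.PosSemidef) (hB : B.PosSemidef) :
    0 ≤ ((A * B).trace).re := by
  have h1 : (A * B).trace = (hB.sqrt * A * hB.sqrt).trace := by
    rw [trace_mul_cycle, hB.sqrt_mul_self, trace_mul_comm]
  rw [h1]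
  have h2 : (hB.sqrt * A * hB.sqrt).PosSemidef := by
    have := hA.mul_mul_conjTranspose_same hB.sqrt
    rwa [hB.posSemidef_sqrt.1.eq] at this
  exact trace_re_nonneg' h2

end SRMAux

/-- Packing-style average error bound for the square-root measurement: if each detector `P_ℓ`
identifies its own state up to error `λ` and confuses other states with probability at most `ν`,
then the square-root measurement `Λ_ℓ = S^{−1/2} P_ℓ S^{−1/2}` has average probability of error
at most `2λ + 4(|L| − 1)ν`. -/
theorem srm_packing_bound {L d : Type*} [Fintype L] [Nonempty L] [DecidableEq L]
    [Fintype d] [DecidableEq d]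
    (ρ : L → Matrix d d ℂ)
    (hρ : ∀ ℓ, (ρ ℓ).PosSemidef ∧ (ρ ℓ).trace = 1)
    (P : L → Matrix d d ℂ)
    (hP : ∀ ℓ, (P ℓ).PosSemidef ∧ ((1 : Matrix d d ℂ) - P ℓ).PosSemidef)
    (hS : (∑ ℓ, P ℓ).PosDef)
    (lam ν : ℝ) (hlam : 0 ≤ lam) (hν : 0 ≤ ν)
    (hdet : ∀ ℓ, 1 - lam ≤ ((P ℓ * ρ ℓ).trace).re)
    (hconf : ∀ ℓ ℓ', ℓ' ≠ ℓ → ((P ℓ' * ρ ℓ).trace).re ≤ ν) :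
    (1 / (Fintype.card L : ℝ)) *
        ∑ ℓ, ((((1 : Matrix d d ℂ) -
          (hS.posSemidef.sqrt)⁻¹ * P ℓ * (hS.posSemidef.sqrt)⁻¹) * ρ ℓ).trace).re ≤
      2 * lam + 4 * ((Fintype.card L : ℝ) - 1) * ν := by
  classical
  set S : Matrix d d ℂ := ∑ ℓ, P ℓ with hSdef
  set M : Matrix d d ℂ := (hS.posSemidef.sqrt)⁻¹ with hMdef
  have hcard : 0 < (Fintype.card L : ℝ) := by
    exact_mod_cast Fintype.card_pos
  -- S - P ℓ is PSD
  have hSP : ∀ ℓ : L, (S - P ℓ).PosSemidef := by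
    intro ℓ
    have he : S - P ℓ = ∑ ℓ' ∈ Finset.univ.erase ℓ, P ℓ' := by
      rw [hSdef, ← Finset.sum_erase_add Finset.univ P (Finset.mem_univ ℓ)]
      exact add_sub_cancel_right _ _
    rw [he]
    exact Finset.sum_induction P _ (fun a b ha hb => ha.add hb) Matrix.PosSemidef.zero
      (fun i _ => (hP i).1)
  -- per-letter error bound
  have key : ∀ ℓ : L, ((((1 : Matrix d d ℂ) - M * P ℓ * M) * ρ ℓ).trace).re
      ≤ 2 * lam + 4 * ((Fintype.card L : ℝ) - 1) * ν := by
    intro ℓ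
    have hop := hn_ineq (hP ℓ).1 (hP ℓ).2 hS (hSP ℓ)
    have h0 := trace_mul_re_nonneg' hop (hρ ℓ).1
    have hexp : ((((1 - P ℓ) + (1 - P ℓ) + ((S - P ℓ) + (S - P ℓ) + (S - P ℓ) + (S - P ℓ)))
          - (1 - M * P ℓ * M)) * ρ ℓ).trace
        = (((1 - P ℓ) * ρ ℓ).trace + ((1 - P ℓ) * ρ ℓ).trace
          + (((S - P ℓ) * ρ ℓ).trace + ((S - P ℓ) * ρ ℓ).trace
            + ((S - P ℓ) * ρ ℓ).trace + ((S - P ℓ) * ρ ℓ).trace))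
          - ((1 - M * P ℓ * M) * ρ ℓ).trace := by
      simp only [Matrix.add_mul, Matrix.sub_mul, Matrix.trace_add, Matrix.trace_sub]
    rw [hexp] at h0
    set a : ℝ := (((1 - P ℓ) * ρ ℓ).trace).re with hadef
    set b : ℝ := (((S - P ℓ) * ρ ℓ).trace).re with hbdef
    have h0' : 0 ≤ a + a + (b + b + b + b)
        - ((((1 : Matrix d d ℂ) - M * P ℓ * M) * ρ ℓ).trace).re := by
      simpa [Complex.add_re, Complex.sub_re, hadef, hbdef] using h0
    have ha : a ≤ lam := by
      have : ((1 - P ℓ) * ρ ℓ).trace = (ρ ℓ).trace - (P ℓ * ρ ℓ).trace := by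
        rw [Matrix.sub_mul, Matrix.trace_sub, Matrix.one_mul]
      rw [hadef, this, Complex.sub_re, (hρ ℓ).2, Complex.one_re]
      have := hdet ℓ
      linarith
    have hb : b ≤ ((Fintype.card L : ℝ) - 1) * ν := by
      have he : S - P ℓ = ∑ ℓ' ∈ Finset.univ.erase ℓ, P ℓ' := by
        rw [hSdef, ← Finset.sum_erase_add Finset.univ P (Finset.mem_univ ℓ)]
        exact add_sub_cancel_right _ _
      have hbe : b = ∑ ℓ' ∈ Finset.univ.erase ℓ, ((P ℓ' * ρ ℓ).trace).re := by
        rw [hbdef, he, Finset.sum_mul, Matrix.trace_sum, Complex.re_sum]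
      rw [hbe]
      calc ∑ ℓ' ∈ Finset.univ.erase ℓ, ((P ℓ' * ρ ℓ).trace).re
          ≤ ∑ _ℓ' ∈ Finset.univ.erase ℓ, ν :=
            Finset.sum_le_sum fun ℓ' hℓ' => hconf ℓ ℓ' (Finset.ne_of_mem_erase hℓ')
        _ = ((Fintype.card L : ℝ) - 1) * ν := by
            rw [Finset.sum_const, Finset.card_erase_of_mem (Finset.mem_univ ℓ),
              Finset.card_univ, nsmul_eq_mul]
            congr 1
            rw [Nat.cast_sub Fintype.card_pos, Nat.cast_one]
    linarith
  -- sum up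
  have hsum : ∑ ℓ, ((((1 : Matrix d d ℂ) - M * P ℓ * M) * ρ ℓ).trace).re
      ≤ (Fintype.card L : ℝ) * (2 * lam + 4 * ((Fintype.card L : ℝ) - 1) * ν) := by
    calc ∑ ℓ, ((((1 : Matrix d d ℂ) - M * P ℓ * M) * ρ ℓ).trace).re
        ≤ ∑ _ℓ : L, (2 * lam + 4 * ((Fintype.card L : ℝ) - 1) * ν) :=
          Finset.sum_le_sum fun ℓ _ => key ℓ
      _ = (Fintype.card L : ℝ) * (2 * lam + 4 * ((Fintype.card L : ℝ) - 1) * ν) := by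
          rw [Finset.sum_const, Finset.card_univ, nsmul_eq_mul]
  rw [one_div]
  rw [inv_mul_le_iff₀ hcard]
  exact hsum
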